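/- Let d ≥ 1 be an integer, p > 1 and s, w ∈ ℝ. The family ( ω_m^j(p,s,w)^p )_{(j,m) ∈ (ℕ∪{0}) × ℤ^d}, i.e. the family 2^{j p (s − d/p + d/2)} · (1 + 2^{−2j}|m|²)^{p w / 2}, is summable if and only if s < −d/2 and w < −d/p. -/

import Mathlib

open scoped ENNReal


/-- The weighted Besov wavelet weight `ω_m^j(p,s,w) = 2^{j(s - d/p + d/2)} (1 + 2^{-2j}|m|²)^{w/2}`. -/
noncomputable def besovWeight (d : ℕ) (p s w : ℝ) (j : ℕ) (m : Fin d → ℤ) : ℝ :=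
  (2 : ℝ) ^ ((j : ℝ) * (s - (d : ℝ) / p + (d : ℝ) / 2)) *
    (1 + (2 : ℝ) ^ (-(2 * (j : ℝ))) * ∑ i, ((m i : ℝ)) ^ 2) ^ (w / 2)

namespace BesovAux

open Finset

noncomputable def eps (j : ℕ) : ℝ := (2 : ℝ) ^ (-(2 * (j : ℝ)))

lemma eps_pos (j : ℕ) : 0 < eps j := Real.rpow_pos_of_pos two_pos _

lemma eps_zero : eps 0 = 1 := by simp [eps]

lemma two_rpow_two : (2 : ℝ) ^ (2 : ℝ) = 4 := by
  rw [show (2 : ℝ) = ((2 : ℕ) : ℝ) by norm_num, Real.rpow_natCast]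
  norm_num

lemma eps_succ (j : ℕ) : eps (j + 1) * 4 = eps j := by
  rw [← two_rpow_two, eps, eps, ← Real.rpow_add two_pos]
  congr 1
  push_cast
  ring

lemma eps_mul_sq (j : ℕ) : eps j * ((2 : ℝ) ^ j) ^ 2 = 1 := by
  rw [← pow_mul, ← Real.rpow_natCast (2 : ℝ) (j * 2), eps, ← Real.rpow_add two_pos]
  rw [show -(2 * (j : ℝ)) + ((j * 2 : ℕ) : ℝ) = 0 by push_cast; ring, Real.rpow_zero]

noncomputable def Q {d : ℕ} (m : Fin d → ℤ) : ℝ := ∑ i, ((m i : ℝ)) ^ 2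

lemma Q_nonneg {d : ℕ} (m : Fin d → ℤ) : 0 ≤ Q m :=
  Finset.sum_nonneg fun i _ => sq_nonneg _

lemma base_pos' {d : ℕ} (m : Fin d → ℤ) : 0 < 1 + Q m := by
  nlinarith [Q_nonneg m]

lemma base_pos {d : ℕ} (j : ℕ) (m : Fin d → ℤ) : 0 < 1 + eps j * Q m := by
  have := eps_pos j
  have := Q_nonneg m
  nlinarith

noncomputable def F (d : ℕ) (A α : ℝ) (j : ℕ) (m : Fin d → ℤ) : ℝ :=
  (2 : ℝ) ^ ((j : ℝ) * A) * (1 + eps j * Q m) ^ α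

lemma F_nonneg (d : ℕ) (A α : ℝ) (j : ℕ) (m : Fin d → ℤ) : 0 ≤ F d A α j m :=
  mul_nonneg (Real.rpow_nonneg (by norm_num) _) (Real.rpow_nonneg (base_pos j m).le _)

lemma besov_pow_eq (d : ℕ) (p s w : ℝ) (j : ℕ) (m : Fin d → ℤ) :
    besovWeight d p s w j m ^ p
      = F d (p * (s - (d : ℝ) / p + (d : ℝ) / 2)) (p * w / 2) j m := by
  have hb : (0 : ℝ) ≤ 1 + eps j * Q m := (base_pos j m).le
  have h2 : (0 : ℝ) ≤ (2 : ℝ) := by norm_num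
  simp only [besovWeight, F, eps, Q] at hb ⊢
  rw [Real.mul_rpow (Real.rpow_nonneg h2 _) (Real.rpow_nonneg hb _),
    ← Real.rpow_mul h2, ← Real.rpow_mul hb,
    show (j : ℝ) * (s - (d : ℝ) / p + (d : ℝ) / 2) * p
        = (j : ℝ) * (p * (s - (d : ℝ) / p + (d : ℝ) / 2)) from by ring,
    show w / 2 * p = p * w / 2 from by ring]


/-! ### One-dimensional sums -/

noncomputable def Nn (β : ℝ) (j : ℕ) : ℝ≥0∞ :=
  ∑' n : ℕ, ENNReal.ofReal ((1 + eps j * (n : ℝ) ^ 2) ^ β)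

noncomputable def Sz (β : ℝ) (j : ℕ) : ℝ≥0∞ :=
  ∑' k : ℤ, ENNReal.ofReal ((1 + eps j * (k : ℝ) ^ 2) ^ β)

lemma one_dim_base_pos (j : ℕ) (x : ℝ) : 0 < 1 + eps j * x ^ 2 := by
  have := eps_pos j
  nlinarith [sq_nonneg x]

lemma Sz_le (β : ℝ) (j : ℕ) : Sz β j ≤ 2 * Nn β j := by
  have h := (tsum_nat_add_neg_add_one (f := fun k : ℤ =>
    ENNReal.ofReal ((1 + eps j * (k : ℝ) ^ 2) ^ β)) ENNReal.summable).symm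
  rw [Sz, h, ENNReal.tsum_add, two_mul]
  gcongr
  · exact le_of_eq (tsum_congr fun n => by norm_num)
  · have he : ∀ n : ℕ, ENNReal.ofReal ((1 + eps j * ((-(n + 1) : ℤ) : ℝ) ^ 2) ^ β)
        = ENNReal.ofReal ((1 + eps j * ((n + 1 : ℕ) : ℝ) ^ 2) ^ β) := fun n => by
      congr 2
      push_cast
      ring
    rw [tsum_congr he]
    have h0 := tsum_eq_zero_add' (f := fun n : ℕ =>
      ENNReal.ofReal ((1 + eps j * (n : ℝ) ^ 2) ^ β)) ENNReal.summable
    rw [Nn, h0]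
    exact le_add_self

lemma Nn_succ_le {β : ℝ} (hβ : β ≤ 0) (j : ℕ) : Nn β (j + 1) ≤ 2 * Nn β j := by
  have h := (tsum_even_add_odd (f := fun n : ℕ =>
    ENNReal.ofReal ((1 + eps (j + 1) * (n : ℝ) ^ 2) ^ β))
    ENNReal.summable ENNReal.summable).symm
  rw [Nn, h, two_mul]
  gcongr
  · refine le_of_eq (tsum_congr fun k => ?_)
    congr 2
    have h4 := eps_succ j
    push_cast
    nlinarith [sq_nonneg (k : ℝ)]
  · refine Summable.tsum_le_tsum (fun k => ?_) ENNReal.summable ENNReal.summable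
    apply ENNReal.ofReal_le_ofReal
    apply Real.rpow_le_rpow_of_nonpos (one_dim_base_pos j _) _ hβ
    have h4 := eps_succ j
    have he : 0 < eps (j + 1) := eps_pos (j + 1)
    push_cast
    nlinarith [mul_nonneg he.le (show (0 : ℝ) ≤ 4 * (k : ℝ) + 1 by positivity)]

lemma Nn_le_pow {β : ℝ} (hβ : β ≤ 0) (j : ℕ) : Nn β j ≤ 2 ^ j * Nn β 0 := by
  induction j with
  | zero => simp
  | succ j ih =>
    calc Nn β (j + 1) ≤ 2 * Nn β j := Nn_succ_le hβ j
    _ ≤ 2 * (2 ^ j * Nn β 0) := by gcongr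
    _ = 2 ^ (j + 1) * Nn β 0 := by ring

lemma Nn_zero_lt_top {β : ℝ} (hβ : β < -(1 / 2)) : Nn β 0 < ⊤ := by
  have hβ0 : β ≤ 0 := by linarith
  have hsum : Summable (fun n : ℕ => ((n : ℝ) + 1) ^ (2 * β)) := by
    have h1 : Summable (fun n : ℕ => (n : ℝ) ^ (2 * β)) :=
      Real.summable_nat_rpow.mpr (by linarith)
    have h2 := h1.comp_injective (add_left_injective 1)
    refine h2.congr fun n => ?_
    simp only [Function.comp]
    push_cast
    ring_nf
  have h0 := tsum_eq_zero_add' (f := fun n : ℕ =>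
    ENNReal.ofReal ((1 + eps 0 * (n : ℝ) ^ 2) ^ β)) ENNReal.summable
  rw [Nn, h0]
  apply ENNReal.add_lt_top.mpr
  constructor
  · simp [eps_zero]
  · have hle : ∀ n : ℕ, ENNReal.ofReal ((1 + eps 0 * ((n + 1 : ℕ) : ℝ) ^ 2) ^ β)
        ≤ ENNReal.ofReal (((n : ℝ) + 1) ^ (2 * β)) := by
      intro n
      apply ENNReal.ofReal_le_ofReal
      have hx : (0 : ℝ) < ((n : ℝ) + 1) ^ 2 := by positivity
      have : (((n : ℝ) + 1) ^ 2) ^ β = ((n : ℝ) + 1) ^ (2 * β) := by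
        rw [← Real.rpow_natCast ((n : ℝ) + 1) 2, ← Real.rpow_mul (by positivity)]
        norm_num
      rw [← this]
      apply Real.rpow_le_rpow_of_nonpos hx _ hβ0
      rw [eps_zero]
      push_cast
      nlinarith
    calc (∑' n : ℕ, ENNReal.ofReal ((1 + eps 0 * ((n + 1 : ℕ) : ℝ) ^ 2) ^ β))
        ≤ ∑' n : ℕ, ENNReal.ofReal (((n : ℝ) + 1) ^ (2 * β)) :=
          Summable.tsum_le_tsum hle ENNReal.summable ENNReal.summable
    _ = ENNReal.ofReal (∑' n : ℕ, ((n : ℝ) + 1) ^ (2 * β)) :=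
          (ENNReal.ofReal_tsum_of_nonneg (fun n => Real.rpow_nonneg (by positivity) _) hsum).symm
    _ < ⊤ := ENNReal.ofReal_lt_top



/-! ### Product structure over `Fin d → ℤ` -/

lemma tsum_pi_prod (g : ℤ → ℝ≥0∞) : ∀ n : ℕ,
    (∑' m : Fin n → ℤ, ∏ i, g (m i)) = (∑' k : ℤ, g k) ^ n
  | 0 => by
    rw [tsum_fintype]
    simp
  | n + 1 => by
    rw [← (Fin.consEquiv (fun _ : Fin (n + 1) => ℤ)).tsum_eq
      (f := fun m : Fin (n + 1) → ℤ => ∏ i, g (m i))]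
    have h1 : ∀ x : ℤ × (Fin n → ℤ),
        (∏ i, g ((Fin.consEquiv (fun _ : Fin (n + 1) => ℤ)) x i))
          = g x.1 * ∏ i, g (x.2 i) := by
      intro x
      rw [Fin.prod_univ_succ]
      simp [Fin.consEquiv]
    rw [tsum_congr h1, ENNReal.tsum_prod']
    have h2 : ∀ k : ℤ, (∑' m : Fin n → ℤ, g k * ∏ i, g (m i))
        = g k * (∑' k : ℤ, g k) ^ n := by
      intro k
      rw [ENNReal.tsum_mul_left, tsum_pi_prod g n]
    rw [tsum_congr h2, ENNReal.tsum_mul_right, pow_succ, mul_comm]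

lemma ofReal_prod {ι : Type*} (s : Finset ι) (f : ι → ℝ) (hf : ∀ i ∈ s, 0 ≤ f i) :
    ENNReal.ofReal (∏ i ∈ s, f i) = ∏ i ∈ s, ENNReal.ofReal (f i) := by
  induction s using Finset.cons_induction with
  | empty => simp
  | cons a s ha ih =>
    rw [Finset.prod_cons, Finset.prod_cons,
      ENNReal.ofReal_mul (hf a (Finset.mem_cons_self a s)),
      ih fun i hi => hf i (Finset.mem_cons_of_mem hi)]

lemma prod_bound {d : ℕ} (hd : 1 ≤ d) {ε α : ℝ} (hε : 0 < ε) (hα : α ≤ 0)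
    (m : Fin d → ℤ) :
    (1 + ε * Q m) ^ α ≤ ∏ i, (1 + ε * ((m i : ℝ)) ^ 2) ^ (α / d) := by
  have hd0 : (0 : ℝ) < d := by exact_mod_cast hd
  set b : ℝ := 1 + ε * Q m with hb
  have hQ : 0 ≤ Q m := Q_nonneg m
  have hb1 : (1 : ℝ) ≤ b := by nlinarith
  have hb0 : (0 : ℝ) ≤ b := by linarith
  have hfac : ∀ i : Fin d, 1 + ε * ((m i : ℝ)) ^ 2 ≤ b := by
    intro i
    have : ((m i : ℝ)) ^ 2 ≤ Q m :=
      Finset.single_le_sum (f := fun i => ((m i : ℝ)) ^ 2)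
        (fun i _ => sq_nonneg _) (Finset.mem_univ i)
    rw [hb]
    nlinarith
  have hfacpos : ∀ i : Fin d, (0 : ℝ) < 1 + ε * ((m i : ℝ)) ^ 2 := by
    intro i
    nlinarith [sq_nonneg ((m i : ℝ))]
  have hP : (∏ i, (1 + ε * ((m i : ℝ)) ^ 2)) ≤ b ^ d := by
    have h := Finset.prod_le_prod (s := Finset.univ)
      (f := fun i : Fin d => 1 + ε * ((m i : ℝ)) ^ 2) (g := fun _ => b)
      (fun i _ => (hfacpos i).le) (fun i _ => hfac i)
    simpa [Finset.prod_const] using h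
  have hPpos : (0 : ℝ) < ∏ i, (1 + ε * ((m i : ℝ)) ^ 2) :=
    Finset.prod_pos fun i _ => hfacpos i
  have key : b ^ α = (b ^ (d : ℕ)) ^ (α / d) := by
    rw [← Real.rpow_natCast b d, ← Real.rpow_mul hb0]
    congr 1
    field_simp
  rw [key, Real.finset_prod_rpow Finset.univ _ (fun i _ => (hfacpos i).le) (α / d)]
  exact Real.rpow_le_rpow_of_nonpos hPpos hP (div_nonpos_iff.mpr (Or.inr ⟨hα, hd0.le⟩))

lemma inner_le {d : ℕ} (hd : 1 ≤ d) {α : ℝ} (hα : α ≤ 0) (j : ℕ) :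
    (∑' m : Fin d → ℤ, ENNReal.ofReal ((1 + eps j * Q m) ^ α))
      ≤ (Sz (α / d) j) ^ d := by
  calc (∑' m : Fin d → ℤ, ENNReal.ofReal ((1 + eps j * Q m) ^ α))
      ≤ ∑' m : Fin d → ℤ, ∏ i, ENNReal.ofReal ((1 + eps j * ((m i : ℝ)) ^ 2) ^ (α / d)) := by
        refine Summable.tsum_le_tsum (fun m => ?_) ENNReal.summable ENNReal.summable
        rw [← ofReal_prod _ _ fun i _ => Real.rpow_nonneg (one_dim_base_pos j _).le _]
        exact ENNReal.ofReal_le_ofReal (prod_bound hd (eps_pos j) hα m)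
  _ = (∑' k : ℤ, ENNReal.ofReal ((1 + eps j * (k : ℝ) ^ 2) ^ (α / d))) ^ d :=
        tsum_pi_prod (fun k : ℤ => ENNReal.ofReal ((1 + eps j * (k : ℝ) ^ 2) ^ (α / (d : ℝ)))) d
  _ = (Sz (α / d) j) ^ d := rfl

/-! ### Transfer between real summability and `ℝ≥0∞` sums -/

lemma summable_iff_ofReal_ne_top {ι : Type*} (f : ι → ℝ) (hf : ∀ x, 0 ≤ f x) :
    Summable f ↔ (∑' x, ENNReal.ofReal (f x)) ≠ ⊤ := by
  have h1 : ∀ x, ENNReal.ofReal (f x) = ((f x).toNNReal : ℝ≥0∞) := fun x => rfl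
  rw [tsum_congr h1, ENNReal.tsum_coe_ne_top_iff_summable, ← NNReal.summable_coe]
  constructor
  · intro h
    exact h.congr fun x => (Real.coe_toNNReal _ (hf x)).symm
  · intro h
    exact h.congr fun x => Real.coe_toNNReal _ (hf x)

lemma geom_summable {c : ℝ} (hc : c < 0) :
    Summable (fun j : ℕ => (2 : ℝ) ^ ((j : ℝ) * c)) := by
  have h : ∀ j : ℕ, (2 : ℝ) ^ ((j : ℝ) * c) = ((2 : ℝ) ^ c) ^ (j : ℕ) := by
    intro j
    rw [← Real.rpow_natCast ((2 : ℝ) ^ c) j, ← Real.rpow_mul (by norm_num)]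
    ring_nf
  have := summable_geometric_of_lt_one (r := (2 : ℝ) ^ c)
    (Real.rpow_nonneg (by norm_num) c) (Real.rpow_lt_one_of_one_lt_of_neg one_lt_two hc)
  exact this.congr fun j => (h j).symm


/-! ### Lower bounds: boxes and shells -/

noncomputable def Box (d n : ℕ) : Finset (Fin d → ℤ) :=
  Finset.Icc (fun _ => -(n : ℤ)) (fun _ => (n : ℤ))

lemma card_Box (d n : ℕ) : (Box d n).card = (2 * n + 1) ^ d := by
  rw [Box, Pi.card_Icc]
  simp only [Int.card_Icc, Finset.prod_const, Finset.card_univ, Fintype.card_fin]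
  congr 1
  omega

lemma mem_Box {d n : ℕ} {m : Fin d → ℤ} :
    m ∈ Box d n ↔ ∀ i, -(n : ℤ) ≤ m i ∧ m i ≤ (n : ℤ) := by
  rw [Box, Finset.mem_Icc, Pi.le_def, Pi.le_def]
  exact ⟨fun h i => ⟨h.1 i, h.2 i⟩, fun h => ⟨fun i => (h i).1, fun i => (h i).2⟩⟩

lemma Box_subset {d n n' : ℕ} (h : n ≤ n') : Box d n ⊆ Box d n' := by
  apply Finset.Icc_subset_Icc <;> intro i <;> simp <;> omega

lemma Q_le_of_mem {d n : ℕ} {m : Fin d → ℤ} (hm : m ∈ Box d n) :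
    Q m ≤ (d : ℝ) * (n : ℝ) ^ 2 := by
  rw [mem_Box] at hm
  have h : ∀ i : Fin d, ((m i : ℝ)) ^ 2 ≤ (n : ℝ) ^ 2 := by
    intro i
    have h1 := (hm i).1
    have h2 := (hm i).2
    have h1' : -(n : ℝ) ≤ (m i : ℝ) := by exact_mod_cast h1
    have h2' : (m i : ℝ) ≤ (n : ℝ) := by exact_mod_cast h2
    exact sq_le_sq' h1' h2'
  calc Q m ≤ ∑ _i : Fin d, (n : ℝ) ^ 2 := Finset.sum_le_sum fun i _ => h i
  _ = (d : ℝ) * (n : ℝ) ^ 2 := by simp [Finset.sum_const, Finset.card_univ, nsmul_eq_mul]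

lemma aux_c {d n : ℕ} (hd : 1 ≤ d) (hn : 1 ≤ n) :
    (1 + 4 * (d : ℝ)) ^ (-(d : ℝ) / 2)
      ≤ (n : ℝ) ^ d * (1 + 4 * (d : ℝ) * (n : ℝ) ^ 2) ^ (-(d : ℝ) / 2) := by
  have hd0 : (0 : ℝ) < d := by exact_mod_cast hd
  have hn1 : (1 : ℝ) ≤ (n : ℝ) := by exact_mod_cast hn
  have hn0 : (0 : ℝ) < (n : ℝ) := by linarith
  have hb0 : (0 : ℝ) < 1 + 4 * (d : ℝ) := by linarith
  have h1 : 1 + 4 * (d : ℝ) * (n : ℝ) ^ 2 ≤ (1 + 4 * (d : ℝ)) * (n : ℝ) ^ 2 := by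
    nlinarith
  have h2 : ((1 + 4 * (d : ℝ)) * (n : ℝ) ^ 2) ^ (-(d : ℝ) / 2)
      ≤ (1 + 4 * (d : ℝ) * (n : ℝ) ^ 2) ^ (-(d : ℝ) / 2) := by
    apply Real.rpow_le_rpow_of_nonpos (by nlinarith) h1
    apply div_nonpos_iff.mpr
    right
    constructor <;> linarith
  have h3 : ((1 + 4 * (d : ℝ)) * (n : ℝ) ^ 2) ^ (-(d : ℝ) / 2)
      = (1 + 4 * (d : ℝ)) ^ (-(d : ℝ) / 2) * ((n : ℝ) ^ 2) ^ (-(d : ℝ) / 2) := by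
    exact Real.mul_rpow hb0.le (by positivity)
  have h4 : ((n : ℝ) ^ 2) ^ (-(d : ℝ) / 2) = (n : ℝ) ^ (-(d : ℝ)) := by
    rw [← Real.rpow_natCast (n : ℝ) 2, ← Real.rpow_mul hn0.le]
    congr 1
    push_cast
    ring
  have h5 : (n : ℝ) ^ d * (n : ℝ) ^ (-(d : ℝ)) = 1 := by
    rw [← Real.rpow_natCast (n : ℝ) d, ← Real.rpow_add hn0]
    simp
  calc (1 + 4 * (d : ℝ)) ^ (-(d : ℝ) / 2)
      = (n : ℝ) ^ d * ((1 + 4 * (d : ℝ)) ^ (-(d : ℝ) / 2) * (n : ℝ) ^ (-(d : ℝ))) := by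
        rw [mul_comm ((1 + 4 * (d : ℝ)) ^ (-(d : ℝ) / 2)) _, ← mul_assoc, h5, one_mul]
  _ = (n : ℝ) ^ d * (((1 + 4 * (d : ℝ)) * (n : ℝ) ^ 2) ^ (-(d : ℝ) / 2)) := by
        rw [h3, h4]
  _ ≤ (n : ℝ) ^ d * (1 + 4 * (d : ℝ) * (n : ℝ) ^ 2) ^ (-(d : ℝ) / 2) := by
        have : (0 : ℝ) ≤ (n : ℝ) ^ d := by positivity
        exact mul_le_mul_of_nonneg_left h2 this

lemma shell {d : ℕ} (hd : 1 ≤ d) {n : ℕ} (hn : 1 ≤ n) :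
    (1 + 4 * (d : ℝ)) ^ (-(d : ℝ) / 2)
      ≤ ∑ m ∈ Box d (2 * n) \ Box d n, (1 + Q m) ^ (-(d : ℝ) / 2) := by
  have hα₀ : -(d : ℝ) / 2 ≤ 0 := by
    have : (0 : ℝ) ≤ (d : ℝ) := Nat.cast_nonneg d
    apply div_nonpos_iff.mpr
    right
    constructor <;> linarith
  have hterm : ∀ m ∈ Box d (2 * n) \ Box d n,
      (1 + 4 * (d : ℝ) * (n : ℝ) ^ 2) ^ (-(d : ℝ) / 2) ≤ (1 + Q m) ^ (-(d : ℝ) / 2) := by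
    intro m hm
    have hm2 : m ∈ Box d (2 * n) := (Finset.mem_sdiff.mp hm).1
    have hQ : Q m ≤ (d : ℝ) * ((2 * n : ℕ) : ℝ) ^ 2 := Q_le_of_mem hm2
    have hQ' : Q m ≤ 4 * (d : ℝ) * (n : ℝ) ^ 2 := by
      push_cast at hQ
      nlinarith [hQ]
    exact Real.rpow_le_rpow_of_nonpos (base_pos' m) (by linarith) hα₀
  have hcard : n ^ d ≤ (Box d (2 * n) \ Box d n).card := by
    rw [Finset.card_sdiff_of_subset (Box_subset (by omega)), card_Box, card_Box]
    have h1 : (2 * n + 1) ^ d + (2 * n) ^ d ≤ (2 * (2 * n) + 1) ^ d := by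
      have h2 := pow_add_pow_le (x := 2 * n + 1) (y := 2 * n) (n := d)
        (Nat.zero_le _) (Nat.zero_le _) (by omega)
      have h3 : 2 * n + 1 + 2 * n = 2 * (2 * n) + 1 := by ring
      rwa [h3] at h2
    have h4 : n ^ d ≤ (2 * n) ^ d := Nat.pow_le_pow_left (by omega) d
    omega
  have hmin0 : (0 : ℝ) ≤ (1 + 4 * (d : ℝ) * (n : ℝ) ^ 2) ^ (-(d : ℝ) / 2) := by
    apply Real.rpow_nonneg
    positivity
  calc (1 + 4 * (d : ℝ)) ^ (-(d : ℝ) / 2)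
      ≤ (n : ℝ) ^ d * (1 + 4 * (d : ℝ) * (n : ℝ) ^ 2) ^ (-(d : ℝ) / 2) := aux_c hd hn
  _ ≤ ((Box d (2 * n) \ Box d n).card : ℝ)
        * (1 + 4 * (d : ℝ) * (n : ℝ) ^ 2) ^ (-(d : ℝ) / 2) := by
      apply mul_le_mul_of_nonneg_right _ hmin0
      calc ((n : ℝ)) ^ d = ((n ^ d : ℕ) : ℝ) := by push_cast; ring
      _ ≤ _ := by exact_mod_cast hcard
  _ ≤ ∑ m ∈ Box d (2 * n) \ Box d n, (1 + Q m) ^ (-(d : ℝ) / 2) := by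
      have h := Finset.card_nsmul_le_sum (Box d (2 * n) \ Box d n)
        (fun m => (1 + Q m) ^ (-(d : ℝ) / 2))
        ((1 + 4 * (d : ℝ) * (n : ℝ) ^ 2) ^ (-(d : ℝ) / 2)) hterm
      rwa [nsmul_eq_mul] at h

lemma grow {d : ℕ} (hd : 1 ≤ d) (L : ℕ) :
    (L : ℝ) * (1 + 4 * (d : ℝ)) ^ (-(d : ℝ) / 2)
      ≤ ∑ m ∈ Box d (2 ^ L), (1 + Q m) ^ (-(d : ℝ) / 2) := by
  induction L with
  | zero =>
    simp only [Nat.cast_zero, zero_mul]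
    exact Finset.sum_nonneg fun m _ => Real.rpow_nonneg (base_pos' m).le _
  | succ L ih =>
    have hsub : Box d (2 ^ L) ⊆ Box d (2 ^ (L + 1)) :=
      Box_subset (Nat.pow_le_pow_right (by norm_num) (Nat.le_succ L))
    rw [← Finset.sum_sdiff hsub]
    have h2 : (2 : ℕ) ^ (L + 1) = 2 * 2 ^ L := by ring
    have hsh := shell hd (n := 2 ^ L) (Nat.one_le_two_pow)
    rw [← h2] at hsh
    push_cast
    linarith

lemma not_summable {d : ℕ} (hd : 1 ≤ d) {α : ℝ} (hα : -(d : ℝ) / 2 ≤ α) :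
    ¬ Summable (fun m : Fin d → ℤ => (1 + Q m) ^ α) := by
  intro hsum
  set c : ℝ := (1 + 4 * (d : ℝ)) ^ (-(d : ℝ) / 2) with hc
  have hc0 : 0 < c := Real.rpow_pos_of_pos (by positivity) _
  have hmono : ∀ m : Fin d → ℤ, (1 + Q m) ^ (-(d : ℝ) / 2) ≤ (1 + Q m) ^ α := fun m =>
    Real.rpow_le_rpow_of_exponent_le (by nlinarith [Q_nonneg m]) hα
  have hsum0 : Summable (fun m : Fin d → ℤ => (1 + Q m) ^ (-(d : ℝ) / 2)) :=
    hsum.of_nonneg_of_le (fun m => Real.rpow_nonneg (base_pos' m).le _) hmono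
  have hT : ∀ L : ℕ, (L : ℝ) * c
      ≤ ∑' m : Fin d → ℤ, (1 + Q m) ^ (-(d : ℝ) / 2) := fun L =>
    le_trans (grow hd L)
      (Summable.sum_le_tsum _ (fun m _ => Real.rpow_nonneg (base_pos' m).le _) hsum0)
  obtain ⟨L, hL⟩ := exists_nat_gt ((∑' m : Fin d → ℤ, (1 + Q m) ^ (-(d : ℝ) / 2)) / c)
  have hlt := (div_lt_iff₀ hc0).mp hL
  have := hT L
  nlinarith

end BesovAux



set_option maxHeartbeats 1000000 in
/-- The family `(ω_m^j(p,s,w)^p)_{(j,m)}` is summable iff `s < -d/2` and `w < -d/p`. -/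
theorem besovWeight_pow_summable_iff (d : ℕ) (hd : 1 ≤ d) (p s w : ℝ) (hp : 1 < p) :
    Summable (fun x : ℕ × (Fin d → ℤ) => besovWeight d p s w x.1 x.2 ^ p) ↔
      s < -(d : ℝ) / 2 ∧ w < -(d : ℝ) / p := by
  classical
  have hp0 : (0 : ℝ) < p := by linarith
  have hd0 : (0 : ℝ) < d := by exact_mod_cast hd
  set A : ℝ := p * (s - (d : ℝ) / p + (d : ℝ) / 2) with hA
  set α : ℝ := p * w / 2 with hα
  have hrw : (fun x : ℕ × (Fin d → ℤ) => besovWeight d p s w x.1 x.2 ^ p)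
      = fun x : ℕ × (Fin d → ℤ) => BesovAux.F d A α x.1 x.2 :=
    funext fun x => BesovAux.besov_pow_eq d p s w x.1 x.2
  rw [hrw]
  have hAd : A + (d : ℝ) = p * (s + (d : ℝ) / 2) := by
    rw [hA]
    field_simp
    ring
  have hsiff : s < -(d : ℝ) / 2 ↔ A + (d : ℝ) < 0 := by
    rw [hAd]
    constructor
    · intro h
      apply mul_neg_of_pos_of_neg hp0
      linarith
    · intro h
      nlinarith
  have hwiff : w < -(d : ℝ) / p ↔ α < -(d : ℝ) / 2 := by
    rw [hα, show -(d : ℝ) / p = (-(d : ℝ)) / p by ring, lt_div_iff₀ hp0]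
    constructor
    · intro h
      nlinarith
    · intro h
      nlinarith
  rw [hsiff, hwiff]
  constructor
  · -- Summability implies the conditions
    intro hsum
    have h0 : (0 : (ℕ × (Fin d → ℤ)) → ℝ) ≤ fun x => BesovAux.F d A α x.1 x.2 :=
      fun x => BesovAux.F_nonneg d A α x.1 x.2
    obtain ⟨hslice, hH⟩ := (summable_prod_of_nonneg h0).mp hsum
    have hα2 : α < -(d : ℝ) / 2 := by
      by_contra hcon
      push_neg at hcon
      have h1 : Summable (fun m : Fin d → ℤ => (1 + BesovAux.Q m) ^ α) := by
        refine (hslice 0).congr fun m => ?_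
        show BesovAux.F d A α 0 m = _
        rw [BesovAux.F, BesovAux.eps_zero]
        norm_num
      exact BesovAux.not_summable hd (by linarith) h1
    have hαle : α ≤ 0 := by linarith
    refine ⟨?_, hα2⟩
    by_contra hcon
    push_neg at hcon
    set c' : ℝ := (1 + (d : ℝ)) ^ α with hc'
    have hc'0 : 0 < c' := Real.rpow_pos_of_pos (by linarith) _
    have hub : ∀ j : ℕ, c' ≤ ∑' m : Fin d → ℤ, BesovAux.F d A α j m := by
      intro j
      have hterm : ∀ m ∈ BesovAux.Box d (2 ^ j),
          (2 : ℝ) ^ ((j : ℝ) * A) * c' ≤ BesovAux.F d A α j m := by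
        intro m hm
        rw [BesovAux.F]
        apply mul_le_mul_of_nonneg_left _ (Real.rpow_nonneg (by norm_num) _)
        have hQ : BesovAux.Q m ≤ (d : ℝ) * ((2 ^ j : ℕ) : ℝ) ^ 2 := BesovAux.Q_le_of_mem hm
        have h1 : BesovAux.eps j * BesovAux.Q m ≤ (d : ℝ) := by
          have h2 := mul_le_mul_of_nonneg_left hQ (BesovAux.eps_pos j).le
          calc BesovAux.eps j * BesovAux.Q m
              ≤ BesovAux.eps j * ((d : ℝ) * ((2 ^ j : ℕ) : ℝ) ^ 2) := h2
          _ = (d : ℝ) * (BesovAux.eps j * ((2 : ℝ) ^ j) ^ 2) := by push_cast; ring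
          _ = (d : ℝ) := by rw [BesovAux.eps_mul_sq]; ring
        exact Real.rpow_le_rpow_of_nonpos (BesovAux.base_pos j m) (by linarith) hαle
      have hsum_le := Finset.card_nsmul_le_sum (BesovAux.Box d (2 ^ j))
        (fun m => BesovAux.F d A α j m) _ hterm
      rw [nsmul_eq_mul, BesovAux.card_Box] at hsum_le
      have hts := Summable.sum_le_tsum (BesovAux.Box d (2 ^ j))
        (fun m _ => BesovAux.F_nonneg d A α j m) (hslice j)
      have hone : (1 : ℝ) ≤ (((2 * 2 ^ j + 1) ^ d : ℕ) : ℝ) * (2 : ℝ) ^ ((j : ℝ) * A) := by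
        have hc1 : ((2 ^ (j * d) : ℕ) : ℝ) ≤ (((2 * 2 ^ j + 1) ^ d : ℕ) : ℝ) := by
          have : (2 : ℕ) ^ (j * d) = (2 ^ j) ^ d := by rw [pow_mul]
          rw [this]
          exact_mod_cast Nat.pow_le_pow_left (by omega) d
        have hc2 : ((2 ^ (j * d) : ℕ) : ℝ) * (2 : ℝ) ^ ((j : ℝ) * A)
            = (2 : ℝ) ^ ((j : ℝ) * (A + d)) := by
          push_cast
          rw [← Real.rpow_natCast (2 : ℝ) (j * d), ← Real.rpow_add two_pos]
          congr 1
          push_cast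
          ring
        have hc3 : (1 : ℝ) ≤ (2 : ℝ) ^ ((j : ℝ) * (A + d)) := by
          rw [show (1 : ℝ) = (2 : ℝ) ^ (0 : ℝ) by rw [Real.rpow_zero]]
          apply Real.rpow_le_rpow_of_exponent_le one_le_two
          have : (0 : ℝ) ≤ (j : ℝ) := Nat.cast_nonneg j
          nlinarith
        calc (1 : ℝ) ≤ (2 : ℝ) ^ ((j : ℝ) * (A + d)) := hc3
        _ = ((2 ^ (j * d) : ℕ) : ℝ) * (2 : ℝ) ^ ((j : ℝ) * A) := hc2.symm
        _ ≤ _ := by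
            apply mul_le_mul_of_nonneg_right hc1 (Real.rpow_nonneg (by norm_num) _)
      calc c' = 1 * c' := (one_mul c').symm
      _ ≤ ((((2 * 2 ^ j + 1) ^ d : ℕ) : ℝ) * (2 : ℝ) ^ ((j : ℝ) * A)) * c' :=
          mul_le_mul_of_nonneg_right hone hc'0.le
      _ = (((2 * 2 ^ j + 1) ^ d : ℕ) : ℝ) * ((2 : ℝ) ^ ((j : ℝ) * A) * c') := by ring
      _ ≤ ∑ m ∈ BesovAux.Box d (2 ^ j), BesovAux.F d A α j m := hsum_le
      _ ≤ ∑' m : Fin d → ℤ, BesovAux.F d A α j m := hts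
    have htend := hH.tendsto_atTop_zero
    obtain ⟨j, hj⟩ := (htend.eventually_lt_const hc'0).exists
    exact absurd (hub j) (not_le.mpr hj)
  · -- Conditions imply summability
    rintro ⟨hAd2, hα2⟩
    have hαle : α ≤ 0 := by linarith
    have hβ : α / (d : ℝ) < -(1 / 2) := by
      rw [div_lt_iff₀ hd0]
      linarith
    have hβle : α / (d : ℝ) ≤ 0 :=
      div_nonpos_iff.mpr (Or.inr ⟨hαle, hd0.le⟩)
    refine (BesovAux.summable_iff_ofReal_ne_top
      (fun x : ℕ × (Fin d → ℤ) => BesovAux.F d A α x.1 x.2)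
      (fun x => BesovAux.F_nonneg d A α x.1 x.2)).mpr ?_
    set K : ℝ≥0∞ := (2 * BesovAux.Nn (α / d) 0) ^ d with hK
    have hKtop : K ≠ ⊤ := by
      apply ENNReal.pow_ne_top
      exact ENNReal.mul_ne_top (by norm_num) (BesovAux.Nn_zero_lt_top hβ).ne
    have hgeo : (∑' j : ℕ, ENNReal.ofReal ((2 : ℝ) ^ ((j : ℝ) * (A + d)))) ≠ ⊤ :=
      (BesovAux.summable_iff_ofReal_ne_top _
        (fun j => Real.rpow_nonneg (by norm_num) _)).mp (BesovAux.geom_summable hAd2)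
    have hmain : (∑' x : ℕ × (Fin d → ℤ), ENNReal.ofReal (BesovAux.F d A α x.1 x.2))
        ≤ (∑' j : ℕ, ENNReal.ofReal ((2 : ℝ) ^ ((j : ℝ) * (A + d)))) * K := by
      rw [ENNReal.tsum_prod']
      have hj : ∀ j : ℕ, (∑' m : Fin d → ℤ, ENNReal.ofReal (BesovAux.F d A α j m))
          ≤ ENNReal.ofReal ((2 : ℝ) ^ ((j : ℝ) * (A + d))) * K := by
        intro j
        have h1 : ∀ m : Fin d → ℤ, ENNReal.ofReal (BesovAux.F d A α j m)
            = ENNReal.ofReal ((2 : ℝ) ^ ((j : ℝ) * A))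
              * ENNReal.ofReal ((1 + BesovAux.eps j * BesovAux.Q m) ^ α) := fun m => by
          rw [BesovAux.F, ENNReal.ofReal_mul (Real.rpow_nonneg (by norm_num) _)]
        rw [tsum_congr h1, ENNReal.tsum_mul_left]
        have h2 : (∑' m : Fin d → ℤ, ENNReal.ofReal ((1 + BesovAux.eps j * BesovAux.Q m) ^ α))
            ≤ ((2 : ℝ≥0∞) ^ j) ^ d * K := by
          calc (∑' m : Fin d → ℤ, ENNReal.ofReal ((1 + BesovAux.eps j * BesovAux.Q m) ^ α))
              ≤ (BesovAux.Sz (α / d) j) ^ d := BesovAux.inner_le hd hαle j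
          _ ≤ ((2 : ℝ≥0∞) ^ j * (2 * BesovAux.Nn (α / d) 0)) ^ d := by
              gcongr
              calc BesovAux.Sz (α / d) j ≤ 2 * BesovAux.Nn (α / d) j := BesovAux.Sz_le _ _
              _ ≤ 2 * (2 ^ j * BesovAux.Nn (α / d) 0) := by
                  gcongr
                  exact BesovAux.Nn_le_pow hβle j
              _ = 2 ^ j * (2 * BesovAux.Nn (α / d) 0) := by ring
          _ = ((2 : ℝ≥0∞) ^ j) ^ d * K := by rw [hK, mul_pow]
        calc ENNReal.ofReal ((2 : ℝ) ^ ((j : ℝ) * A))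
              * (∑' m : Fin d → ℤ, ENNReal.ofReal ((1 + BesovAux.eps j * BesovAux.Q m) ^ α))
            ≤ ENNReal.ofReal ((2 : ℝ) ^ ((j : ℝ) * A)) * (((2 : ℝ≥0∞) ^ j) ^ d * K) := by
              gcongr
        _ = (ENNReal.ofReal ((2 : ℝ) ^ ((j : ℝ) * A)) * ((2 : ℝ≥0∞) ^ j) ^ d) * K := by
              ring
        _ = ENNReal.ofReal ((2 : ℝ) ^ ((j : ℝ) * (A + d))) * K := by
              congr 1
              have h3 : ((2 : ℝ≥0∞) ^ j) ^ d = ENNReal.ofReal (((2 : ℝ) ^ j) ^ d) := by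
                rw [ENNReal.ofReal_pow (by positivity), ENNReal.ofReal_pow (by norm_num)]
                norm_num
              rw [h3, ← ENNReal.ofReal_mul (Real.rpow_nonneg (by norm_num) _)]
              congr 1
              rw [← pow_mul, ← Real.rpow_natCast (2 : ℝ) (j * d), ← Real.rpow_add two_pos]
              congr 1
              push_cast
              ring
      calc (∑' j : ℕ, ∑' m : Fin d → ℤ, ENNReal.ofReal (BesovAux.F d A α j m))
          ≤ ∑' j : ℕ, ENNReal.ofReal ((2 : ℝ) ^ ((j : ℝ) * (A + d))) * K :=
            Summable.tsum_le_tsum hj ENNReal.summable ENNReal.summable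
      _ = _ := ENNReal.tsum_mul_right
    exact ne_top_of_le_ne_top (ENNReal.mul_ne_top hgeo hKtop) hmain
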